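/- Let V be a finite-dimensional real vector space with a non-degenerate skew-symmetric bilinear form E, let J : V → V be a linear map with J² = -1 satisfying E(uJ, vJ) = E(u,v) for all u,v and E(vJ, v) > 0 for all v ≠ 0. If U ⊆ V is an isotropic subspace for E, then V = UJ ⊕ U^⊥, where U^⊥ is the E-orthogonal complement of U. -/

import Mathlib

/-- If `(V, E)` is a finite-dimensional real symplectic vector space,
`J` is a complex structure compatible with `E` (i.e. `E(J·, J·) = E(·,·)` and
`E(Jv, v) > 0` for `v ≠ 0`), and `U` is an `E`-isotropic subspace, then
`V = J(U) ⊕ U^⊥`, where `U^⊥` is the `E`-orthogonal complement of `U`. -/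
theorem stmt0 {V : Type*} [AddCommGroup V] [Module ℝ V] [FiniteDimensional ℝ V]
    (E : LinearMap.BilinForm ℝ V)
    (halt : ∀ v, E v v = 0)
    (hnd : ∀ v, (∀ w, E v w = 0) → v = 0)
    (J : V →ₗ[ℝ] V) (hJ : ∀ v, J (J v) = -v)
    (hEJ : ∀ u v, E (J u) (J v) = E u v)
    (hpos : ∀ v, v ≠ 0 → 0 < E (J v) v)
    (U : Submodule ℝ V) (hiso : ∀ u ∈ U, ∀ u' ∈ U, E u u' = 0) :
    IsCompl (U.map J) (LinearMap.BilinForm.orthogonal E U) := by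
  set G : LinearMap.BilinForm ℝ V := E.comp J LinearMap.id with hG
  have hGapp : ∀ x y, G x y = E (J x) y := fun x y => rfl
  -- symmetry of G
  have hsymm : ∀ x y, G x y = G y x := by
    intro x y
    have h1 : E (J y) x = E (J (J y)) (J x) := (hEJ (J y) x).symm
    rw [hGapp, hGapp, h1, hJ]
    have hskew : ∀ a b, E a b = -E b a := by
      intro a b
      have h := halt (a + b)
      simp only [map_add, LinearMap.add_apply, halt] at h
      linarith
    rw [show E (-y) (J x) = -E y (J x) by simp, hskew y (J x)]
    ring
  have hrefl : G.IsRefl := fun x y h => by rw [← hsymm]; exact h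
  -- E.orthogonal U = G.orthogonal (U.map J)
  have horth : LinearMap.BilinForm.orthogonal E U
      = G.orthogonal (U.map J) := by
    ext v
    rw [LinearMap.BilinForm.mem_orthogonal_iff, LinearMap.BilinForm.mem_orthogonal_iff]
    constructor
    · rintro h w ⟨u, hu, rfl⟩
      have : G (J u) v = E (J (J u)) v := rfl
      rw [this, hJ]
      have := h u hu
      simp [this]
    · intro h u hu
      have h2 := h (J u) ⟨u, hu, rfl⟩
      rw [hGapp, hJ] at h2
      have : E u v = 0 := by
        have : (-1 : ℝ) * E u v = 0 := by simpa using h2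
        linarith
      exact this
  rw [horth]
  apply LinearMap.BilinForm.isCompl_orthogonal_of_restrict_nondegenerate hrefl
  refine (LinearMap.IsRefl.nondegenerate_iff_separatingLeft (B := G.restrict (U.map J)) (fun x y h => hrefl (x : V) y h)).mpr ?_
  intro ⟨w, hw⟩ hmap
  have h0 := hmap ⟨w, hw⟩
  rw [LinearMap.BilinForm.restrict_apply] at h0
  by_contra hne
  have hwne : w ≠ 0 := by simpa [Subtype.ext_iff] using hne
  exact absurd h0 (ne_of_gt (hpos w hwne))
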